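/- Let X be a real Hilbert space, K a nonempty closed convex subset of X, A : X → X an operator for which there exist constants m > 0 and M > 0 with (Au − Av, u − v)_X ≥ m‖u − v‖_X² and ‖Au − Av‖_X ≤ M‖u − v‖_X for all u, v ∈ X, and j : X × X → ℝ such that for every η ∈ X the map v ↦ j(η, v) is convex and lower semicontinuous, and there exists α ≥ 0 with j(η, ṽ) − j(η, v) + j(η̃, v) − j(η̃, ṽ) ≤ α‖η − η̃‖_X‖v − ṽ‖_X for all η, η̃, v, ṽ ∈ X; assume m > α and f ∈ X. Let K* be a nonempty closed convex subset of X with K* ⊆ K, and let G : X → X be a monotone Lipschitz continuous operator satisfying: (Gu, v − u)_X ≤ 0 for all u ∈ K and v ∈ K*, and, for u ∈ K, if (Gu, v − u)_X = 0 for all v ∈ K* then u ∈ K*. Let {λ_n} be a sequence of positive reals with λ_n → 0, for each n let u_n ∈ K be the unique element with (Au_n, v − u_n)_X + (1/λ_n)(Gu_n, v − u_n)_X + j(u_n, v) − j(u_n, u_n) ≥ (f, v − u_n)_X for all v ∈ K, and let u* ∈ K* be the unique element with (Au*, v − u*)_X + j(u*, v) − j(u*, u*) ≥ (f, v − u*)_X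 for all v ∈ K*. Then u_n → u* strongly in X as n → ∞. -/

import Mathlib

open scoped InnerProductSpace
open Filter

private lemma ulim_bdd (U : Ultrafilter ℕ) (a : ℕ → ℝ) (C : ℝ) (h : ∀ n, |a n| ≤ C) :
    ∃ x : ℝ, Tendsto a U (nhds x) := by
  obtain ⟨x, -, hx⟩ := (isCompact_Icc (a := -C) (b := C)).ultrafilter_le_nhds (U.map a)
    (by
      rw [le_principal_iff]
      exact Filter.mem_map.2 (Filter.univ_mem' fun n => abs_le.1 (h n)))
  exact ⟨x, hx⟩

private lemma weak_ulim {X : Type*} [NormedAddCommGroup X] [InnerProductSpace ℝ X]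
    [CompleteSpace X] (U : Ultrafilter ℕ) (x : ℕ → X) (C : ℝ) (h : ∀ n, ‖x n‖ ≤ C) :
    ∃ z : X, ∀ y : X, Tendsto (fun n => ⟪x n, y⟫_ℝ) U (nhds ⟪z, y⟫_ℝ) := by
  have hex : ∀ y : X, ∃ r : ℝ, Tendsto (fun n => ⟪x n, y⟫_ℝ) U (nhds r) := fun y =>
    ulim_bdd U _ (C * ‖y‖) fun n => (abs_real_inner_le_norm _ _).trans
      (mul_le_mul_of_nonneg_right (h n) (norm_nonneg y))
  choose φ hφ using hex
  have hadd : ∀ y y', φ (y + y') = φ y + φ y' := by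
    intro y y'
    refine tendsto_nhds_unique ?_ ((hφ y).add (hφ y'))
    have : (fun n => ⟪x n, y⟫_ℝ + ⟪x n, y'⟫_ℝ) = fun n => ⟪x n, y + y'⟫_ℝ := by
      funext n; rw [inner_add_right]
    rw [← this] at *
    exact (hφ (y + y')).congr (by intro n; rw [← inner_add_right])
  have hsmul : ∀ (c : ℝ) y, φ (c • y) = c * φ y := by
    intro c y
    refine tendsto_nhds_unique ?_ ((hφ y).const_mul c)
    exact (hφ (c • y)).congr (by intro n; rw [real_inner_smul_right])
  have hbound : ∀ y, ‖φ y‖ ≤ C * ‖y‖ := by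
    intro y
    rw [Real.norm_eq_abs]
    refine le_of_tendsto ((hφ y).abs) (Filter.univ_mem' fun n => ?_)
    exact (abs_real_inner_le_norm _ _).trans (mul_le_mul_of_nonneg_right (h n) (norm_nonneg y))
  let F : X →ₗ[ℝ] ℝ :=
    { toFun := φ
      map_add' := hadd
      map_smul' := fun c y => by simpa using hsmul c y }
  let F' : X →L[ℝ] ℝ := F.mkContinuous C hbound
  refine ⟨(InnerProductSpace.toDual ℝ X).symm F', fun y => ?_⟩
  rw [InnerProductSpace.toDual_symm_apply]
  exact hφ y

private lemma affine_minorant {X : Type*} [NormedAddCommGroup X] [InnerProductSpace ℝ X]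
    [CompleteSpace X] (ψ : X → ℝ) (hconv : ConvexOn ℝ Set.univ ψ)
    (hlsc : LowerSemicontinuous ψ) (x₀ : X) (r : ℝ) (hr : r < ψ x₀) :
    ∃ (ξ : X) (c : ℝ), (∀ v, ⟪ξ, v⟫_ℝ + c ≤ ψ v) ∧ r < ⟪ξ, x₀⟫_ℝ + c := by
  set E : Set (X × ℝ) := {p | ψ p.1 ≤ p.2} with hEdef
  have hconvE : Convex ℝ E := by
    have h := hconv.convex_epigraph
    have : {p : X × ℝ | p.1 ∈ Set.univ ∧ ψ p.1 ≤ p.2} = E := by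
      ext p; simp [hEdef]
    rwa [this] at h
  have hclosedE : IsClosed E := by
    rw [← isOpen_compl_iff, isOpen_iff_mem_nhds]
    rintro ⟨v, t⟩ hp
    simp only [Set.mem_compl_iff, hEdef, Set.mem_setOf_eq, not_le] at hp
    have h1 : {w : X | (t + ψ v) / 2 < ψ w} ∈ nhds v := hlsc v _ (by linarith)
    have h2 : Set.Iio ((t + ψ v) / 2) ∈ nhds t := Iio_mem_nhds (by linarith)
    rw [nhds_prod_eq]
    refine Filter.mem_of_superset (Filter.prod_mem_prod h1 h2) ?_
    rintro ⟨w, s⟩ ⟨hw, hs⟩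
    simp only [Set.mem_compl_iff, hEdef, Set.mem_setOf_eq, not_le]
    simp only [Set.mem_setOf_eq] at hw
    simp only [Set.mem_Iio] at hs
    linarith
  have hnot : (x₀, r) ∉ E := by
    simp only [hEdef, Set.mem_setOf_eq, not_le]; exact hr
  obtain ⟨f, uu, hfx, hfb⟩ := geometric_hahn_banach_point_closed hconvE hclosedE hnot
  set β : ℝ := f (0, 1) with hβdef
  have hdecomp : ∀ (v : X) (t : ℝ), f (v, t) = f (v, 0) + t * β := by
    intro v t
    have h : (v, t) = (v, 0) + t • ((0 : X), (1 : ℝ)) := by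
      simp [Prod.ext_iff]
    rw [h, map_add, map_smul, smul_eq_mul]
  have hmem : ∀ v : X, (v, ψ v) ∈ E := fun v => by simp [hEdef]
  have hβpos : 0 < β := by
    have h1 : f (x₀, 0) + r * β < uu := by rw [← hdecomp]; exact hfx
    have h2 : uu < f (x₀, 0) + ψ x₀ * β := by rw [← hdecomp]; exact hfb _ (hmem x₀)
    nlinarith
  set g : X →L[ℝ] ℝ := (-β⁻¹) • f.comp (ContinuousLinearMap.inl ℝ X ℝ) with hgdef
  have hg : ∀ v : X, g v = -β⁻¹ * f (v, 0) := by
    intro v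
    simp [hgdef, ContinuousLinearMap.smul_apply, ContinuousLinearMap.comp_apply]
  refine ⟨(InnerProductSpace.toDual ℝ X).symm g, uu * β⁻¹, ?_, ?_⟩
  · intro v
    rw [InnerProductSpace.toDual_symm_apply, hg]
    have h2 : uu < f (v, 0) + ψ v * β := by rw [← hdecomp]; exact hfb _ (hmem v)
    have hb1 : β * β⁻¹ = 1 := mul_inv_cancel₀ hβpos.ne'
    have h3 := mul_le_mul_of_nonneg_right h2.le (inv_pos.2 hβpos).le
    rw [add_mul, mul_assoc, hb1, mul_one] at h3
    linarith
  · rw [InnerProductSpace.toDual_symm_apply, hg]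
    have h1 : f (x₀, 0) + r * β < uu := by rw [← hdecomp]; exact hfx
    have hb1 : β * β⁻¹ = 1 := mul_inv_cancel₀ hβpos.ne'
    have h3 := mul_lt_mul_of_pos_right h1 (inv_pos.2 hβpos)
    rw [add_mul, mul_assoc, hb1, mul_one] at h3
    linarith

private lemma weak_closed_mem {X : Type*} [NormedAddCommGroup X] [InnerProductSpace ℝ X]
    [CompleteSpace X] (s : Set X) (hconv : Convex ℝ s) (hcl : IsClosed s)
    (U : Ultrafilter ℕ) (x : ℕ → X) (hx : ∀ n, x n ∈ s) (z : X)
    (hz : ∀ y : X, Tendsto (fun n => ⟪x n, y⟫_ℝ) U (nhds ⟪z, y⟫_ℝ)) : z ∈ s := by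
  by_contra hzs
  obtain ⟨f, uu, hfz, hfb⟩ := geometric_hahn_banach_point_closed hconv hcl hzs
  set y := (InnerProductSpace.toDual ℝ X).symm f with hy
  have hfy : ∀ w : X, f w = ⟪w, y⟫_ℝ := by
    intro w
    rw [real_inner_comm, hy, InnerProductSpace.toDual_symm_apply]
  have : uu ≤ ⟪z, y⟫_ℝ := by
    refine ge_of_tendsto (hz y) (Filter.univ_mem' fun n => ?_)
    show uu ≤ ⟪x n, y⟫_ℝ
    rw [← hfy]; exact (hfb _ (hx n)).le
  rw [← hfy] at this
  linarith
theorem penalty_convergence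
    {X : Type*} [NormedAddCommGroup X] [InnerProductSpace ℝ X] [CompleteSpace X]
    (K : Set X) (hK_ne : K.Nonempty) (hK_closed : IsClosed K) (hK_convex : Convex ℝ K)
    (A : X → X) (m M : ℝ) (hm : 0 < m) (hM : 0 < M)
    (hA_mono : ∀ u v : X, m * ‖u - v‖ ^ 2 ≤ ⟪A u - A v, u - v⟫_ℝ)
    (hA_lip : ∀ u v : X, ‖A u - A v‖ ≤ M * ‖u - v‖)
    (j : X → X → ℝ)
    (hj_convex : ∀ η : X, ConvexOn ℝ Set.univ (j η))
    (hj_lsc : ∀ η : X, LowerSemicontinuous (j η))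
    (α : ℝ) (hα : 0 ≤ α)
    (hj_lip : ∀ η η' v v' : X,
      j η v' - j η v + j η' v - j η' v' ≤ α * ‖η - η'‖ * ‖v - v'‖)
    (hmα : α < m) (f : X)
    (Kstar : Set X) (hKs_ne : Kstar.Nonempty) (hKs_closed : IsClosed Kstar)
    (hKs_convex : Convex ℝ Kstar) (hKs_sub : Kstar ⊆ K)
    (G : X → X)
    (hG_mono : ∀ u v : X, 0 ≤ ⟪G u - G v, u - v⟫_ℝ)
    (hG_lip : ∃ L : ℝ, 0 < L ∧ ∀ u v : X, ‖G u - G v‖ ≤ L * ‖u - v‖)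
    (hG_neg : ∀ u ∈ K, ∀ v ∈ Kstar, ⟪G u, v - u⟫_ℝ ≤ 0)
    (hG_zero : ∀ u ∈ K, (∀ v ∈ Kstar, ⟪G u, v - u⟫_ℝ = 0) → u ∈ Kstar)
    (lam : ℕ → ℝ) (hlam_pos : ∀ n, 0 < lam n)
    (hlam_lim : Tendsto lam atTop (nhds 0))
    (u : ℕ → X)
    (hu : ∀ n, u n ∈ K ∧ ∀ v ∈ K,
      ⟪A (u n), v - u n⟫_ℝ + (1 / lam n) * ⟪G (u n), v - u n⟫_ℝ
        + j (u n) v - j (u n) (u n) ≥ ⟪f, v - u n⟫_ℝ)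
    (ustar : X)
    (hustar : ustar ∈ Kstar ∧ ∀ v ∈ Kstar,
      ⟪A ustar, v - ustar⟫_ℝ + j ustar v - j ustar ustar ≥ ⟪f, v - ustar⟫_ℝ) :
    Tendsto u atTop (nhds ustar) := by
  obtain ⟨L, hL, hGlip⟩ := hG_lip
  obtain ⟨hust_mem, hust_vi⟩ := hustar
  have hustK : ustar ∈ K := hKs_sub hust_mem
  have hma : 0 < m - α := by linarith
  obtain ⟨ξ₀, c₀, hξ₀, -⟩ := affine_minorant (j ustar) (hj_convex ustar) (hj_lsc ustar)
      ustar (j ustar ustar - 1) (by linarith)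
  -- Step (★): basic strong monotonicity estimate
  have hstar : ∀ n, (m - α) * ‖u n - ustar‖ ^ 2 ≤
      ⟪A ustar - f, ustar - u n⟫_ℝ + j ustar ustar - j ustar (u n) := by
    intro n
    obtain ⟨hunK, hvi⟩ := hu n
    have h1 := hvi ustar hustK
    have hGle : ⟪G (u n), ustar - u n⟫_ℝ ≤ 0 := hG_neg _ hunK _ hust_mem
    have h2 : ⟪f, ustar - u n⟫_ℝ ≤
        ⟪A (u n), ustar - u n⟫_ℝ + j (u n) ustar - j (u n) (u n) := by
      have hle : (1 / lam n) * ⟪G (u n), ustar - u n⟫_ℝ ≤ 0 :=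
        mul_nonpos_of_nonneg_of_nonpos (one_div_pos.2 (hlam_pos n)).le hGle
      linarith [h1]
    have h3 := hj_lip (u n) ustar (u n) ustar
    have h4 := hA_mono (u n) ustar
    have e1 : ⟪A (u n) - A ustar, u n - ustar⟫_ℝ
        = -⟪A (u n), ustar - u n⟫_ℝ + ⟪A ustar, ustar - u n⟫_ℝ := by
      have h : ∀ a : X, ⟪a, u n - ustar⟫_ℝ = -⟪a, ustar - u n⟫_ℝ := by
        intro a; rw [← inner_neg_right, neg_sub]
      rw [inner_sub_left, h (A (u n)), h (A ustar)]; ring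
    have e2 : ⟪A ustar - f, ustar - u n⟫_ℝ
        = ⟪A ustar, ustar - u n⟫_ℝ - ⟪f, ustar - u n⟫_ℝ := inner_sub_left _ _ _
    have e3 : ‖u n - ustar‖ * ‖u n - ustar‖ = ‖u n - ustar‖ ^ 2 := by ring
    rw [e1] at h4
    rw [e2]
    linarith [h2, h3, h4]
  -- Boundedness
  obtain ⟨B, hB1, hdB⟩ : ∃ B : ℝ, 1 ≤ B ∧ ∀ n, ‖u n - ustar‖ ≤ B := by
    set K₁ : ℝ := ‖A ustar - f‖ + ‖ξ₀‖ with hK₁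
    set K₂ : ℝ := j ustar ustar - c₀ - ⟪ξ₀, ustar⟫_ℝ with hK₂
    refine ⟨max 1 ((K₁ + |K₂|) / (m - α)), le_max_left _ _, fun n => ?_⟩
    have hs := hstar n
    have hb1 : ⟪A ustar - f, ustar - u n⟫_ℝ ≤ ‖A ustar - f‖ * ‖u n - ustar‖ := by
      have := real_inner_le_norm (A ustar - f) (ustar - u n)
      rwa [norm_sub_rev ustar (u n)] at this
    have hb2 : -(j ustar (u n)) ≤ ‖ξ₀‖ * ‖u n - ustar‖ + (-c₀ - ⟪ξ₀, ustar⟫_ℝ) := by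
      have hmin := hξ₀ (u n)
      have hsplit : ⟪ξ₀, u n - ustar⟫_ℝ = ⟪ξ₀, u n⟫_ℝ - ⟪ξ₀, ustar⟫_ℝ := inner_sub_right _ _ _
      have habs := abs_real_inner_le_norm ξ₀ (u n - ustar)
      have := (abs_le.1 habs).1
      linarith
    have hquad : (m - α) * ‖u n - ustar‖ ^ 2 ≤ K₁ * ‖u n - ustar‖ + K₂ := by
      rw [hK₁, hK₂]; linarith
    by_cases hcase : ‖u n - ustar‖ ≤ 1
    · exact hcase.trans (le_max_left _ _)
    · push_neg at hcase
      have h6 : (m - α) * ‖u n - ustar‖ ≤ K₁ + |K₂| := by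
        nlinarith [le_abs_self K₂, abs_nonneg K₂,
          mul_nonneg (abs_nonneg K₂) (by linarith : (0:ℝ) ≤ ‖u n - ustar‖ - 1)]
      have h7 : ‖u n - ustar‖ ≤ (K₁ + |K₂|) / (m - α) := by
        rw [le_div_iff₀ hma]; linarith
      exact h7.trans (le_max_right _ _)
  have hB0 : (0 : ℝ) ≤ B := by linarith
  obtain ⟨Cu, hCu0, hCu⟩ : ∃ C : ℝ, 0 ≤ C ∧ ∀ n, ‖u n‖ ≤ C := by
    refine ⟨‖ustar‖ + B, by positivity, fun n => ?_⟩
    have := norm_sub_norm_le (u n) ustar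
    linarith [hdB n]
  obtain ⟨Cg, hCg0, hCg⟩ : ∃ C : ℝ, 0 ≤ C ∧ ∀ n, ‖G (u n)‖ ≤ C := by
    refine ⟨‖G ustar‖ + L * B, by positivity, fun n => ?_⟩
    have h1 := norm_sub_norm_le (G (u n)) (G ustar)
    have h2 := hGlip (u n) ustar
    have h3 := mul_le_mul_of_nonneg_left (hdB n) hL.le
    linarith
  obtain ⟨Ca, hCa0, hCa⟩ : ∃ C : ℝ, 0 ≤ C ∧ ∀ n, ‖A (u n)‖ ≤ C := by
    refine ⟨‖A ustar‖ + M * B, by positivity, fun n => ?_⟩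
    have h1 := norm_sub_norm_le (A (u n)) (A ustar)
    have h2 := hA_lip (u n) ustar
    have h3 := mul_le_mul_of_nonneg_left (hdB n) hM.le
    linarith
  -- Penalty estimate: for fixed v ∈ K the G-term is bounded below by -lam n * C(v)
  have hpen : ∀ v ∈ K, ∃ Cv : ℝ, ∀ n, -(lam n * Cv) ≤ ⟪G (u n), v - u n⟫_ℝ := by
    intro v hv
    refine ⟨(Ca + ‖f‖) * (‖v‖ + Cu) + α * B * (Cu + ‖v‖) + j ustar v + ‖ξ₀‖ * Cu + |c₀|, ?_⟩
    intro n
    obtain ⟨hunK, hvi⟩ := hu n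
    have h1 := hvi v hv
    have hnv : ‖v - u n‖ ≤ ‖v‖ + Cu := by
      have := norm_sub_le v (u n); linarith [hCu n]
    have hnv' : ‖u n - v‖ ≤ Cu + ‖v‖ := by
      have := norm_sub_le (u n) v; linarith [hCu n]
    have c1 : ⟪A (u n), v - u n⟫_ℝ ≤ Ca * (‖v‖ + Cu) := by
      have h := real_inner_le_norm (A (u n)) (v - u n)
      have h' := mul_le_mul (hCa n) hnv (norm_nonneg _) hCa0
      linarith
    have c2 : -⟪f, v - u n⟫_ℝ ≤ ‖f‖ * (‖v‖ + Cu) := by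
      have h := (abs_le.1 (abs_real_inner_le_norm f (v - u n))).1
      have h' := mul_le_mul_of_nonneg_left hnv (norm_nonneg f)
      linarith
    have c3 : j (u n) v - j (u n) (u n) ≤ α * B * (Cu + ‖v‖) + j ustar v + ‖ξ₀‖ * Cu + |c₀| := by
      have h3 := hj_lip (u n) ustar (u n) v
      have t2 : α * ‖u n - ustar‖ * ‖u n - v‖ ≤ α * B * (Cu + ‖v‖) :=
        mul_le_mul (mul_le_mul_of_nonneg_left (hdB n) hα) hnv' (norm_nonneg _)
          (mul_nonneg hα hB0)
      have hmin := hξ₀ (u n)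
      have h4 := (abs_le.1 (abs_real_inner_le_norm ξ₀ (u n))).1
      have h5 := mul_le_mul_of_nonneg_left (hCu n) (norm_nonneg ξ₀)
      have h6 : -c₀ ≤ |c₀| := neg_le_abs c₀
      linarith
    have h2 : -((Ca + ‖f‖) * (‖v‖ + Cu) + α * B * (Cu + ‖v‖) + j ustar v + ‖ξ₀‖ * Cu + |c₀|)
        ≤ (1 / lam n) * ⟪G (u n), v - u n⟫_ℝ := by
      have hexp : (Ca + ‖f‖) * (‖v‖ + Cu) = Ca * (‖v‖ + Cu) + ‖f‖ * (‖v‖ + Cu) := by ring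
      linarith [c1, c2, c3, h1, hexp]
    have h3 : lam n * ((1 / lam n) * ⟪G (u n), v - u n⟫_ℝ) = ⟪G (u n), v - u n⟫_ℝ := by
      rw [← mul_assoc, mul_one_div, div_self (hlam_pos n).ne', one_mul]
    have h4 := mul_le_mul_of_nonneg_left h2 (hlam_pos n).le
    rw [h3, mul_neg] at h4
    exact h4
  -- Contradiction setup
  by_contra hcon
  obtain ⟨ε, hε, hfreq⟩ : ∃ ε > 0, ∃ᶠ n in atTop, ε ≤ ‖u n - ustar‖ := by
    by_contra hno
    push_neg at hno
    apply hcon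
    rw [Metric.tendsto_nhds]
    intro ε hε
    have h := hno ε hε
    filter_upwards [h] with n hn
    rw [dist_eq_norm]
    exact hn
  have hne : (atTop ⊓ Filter.principal {n | ε ≤ ‖u n - ustar‖}).NeBot :=
    Filter.frequently_iff_neBot.mp hfreq
  set U : Ultrafilter ℕ := Ultrafilter.of (atTop ⊓ Filter.principal {n | ε ≤ ‖u n - ustar‖})
    with hUdef
  have hUle : (U : Filter ℕ) ≤ atTop ⊓ Filter.principal {n | ε ≤ ‖u n - ustar‖} :=
    Ultrafilter.of_le _
  have hUatTop : (U : Filter ℕ) ≤ atTop := hUle.trans inf_le_left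
  have hUS : ∀ᶠ n in (U : Filter ℕ), ε ≤ ‖u n - ustar‖ :=
    le_principal_iff.1 (hUle.trans inf_le_right)
  -- weak limits along the ultrafilter
  obtain ⟨ut, hut⟩ := weak_ulim U u Cu hCu
  obtain ⟨gT, hgT⟩ := weak_ulim U (fun n => G (u n)) Cg hCg
  obtain ⟨q, hq⟩ := ulim_bdd U (fun n => ⟪G (u n), u n⟫_ℝ) (Cg * Cu)
    (fun n => (abs_real_inner_le_norm _ _).trans
      (mul_le_mul (hCg n) (hCu n) (norm_nonneg _) hCg0))
  have hlamU : Tendsto lam (U : Filter ℕ) (nhds 0) := hlam_lim.mono_left hUatTop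
  have hGlim : ∀ v : X,
      Tendsto (fun n => ⟪G (u n), v - u n⟫_ℝ) (U : Filter ℕ) (nhds (⟪gT, v⟫_ℝ - q)) := by
    intro v
    exact ((hgT v).sub hq).congr fun n => (inner_sub_right _ _ _).symm
  have hF1 : ∀ v ∈ K, 0 ≤ ⟪gT, v⟫_ℝ - q := by
    intro v hv
    obtain ⟨Cv, hCv⟩ := hpen v hv
    have hlhs : Tendsto (fun n => -(lam n * Cv)) (U : Filter ℕ) (nhds 0) := by
      have := (hlamU.mul_const Cv).neg
      simpa using this
    exact le_of_tendsto_of_tendsto' hlhs (hGlim v) fun n => hCv n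
  have hgTq : ∀ v ∈ Kstar, ⟪gT, v⟫_ℝ = q := by
    intro v hv
    have hle : ⟪gT, v⟫_ℝ - q ≤ 0 :=
      le_of_tendsto (hGlim v) (Filter.univ_mem' fun n => hG_neg _ (hu n).1 _ hv)
    have := hF1 v (hKs_sub hv)
    linarith
  have hutK : ut ∈ K := weak_closed_mem K hK_convex hK_closed U u (fun n => (hu n).1) ut hut
  have hF4 : q ≤ ⟪gT, ut⟫_ℝ := by have := hF1 ut hutK; linarith
  have hF5 : ∀ z : X, ⟪gT, z⟫_ℝ - q ≤ ⟪G z, z - ut⟫_ℝ := by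
    intro z
    have hmon : ∀ n, 0 ≤ ⟪G (u n), u n⟫_ℝ - ⟪G (u n), z⟫_ℝ - ⟪u n, G z⟫_ℝ + ⟪G z, z⟫_ℝ := by
      intro n
      have h := hG_mono (u n) z
      have e : ⟪G (u n) - G z, u n - z⟫_ℝ
          = ⟪G (u n), u n⟫_ℝ - ⟪G (u n), z⟫_ℝ - ⟪u n, G z⟫_ℝ + ⟪G z, z⟫_ℝ := by
        rw [inner_sub_left, inner_sub_right, inner_sub_right, real_inner_comm (u n) (G z)]
        ring
      rw [e] at h
      exact h
    have hlim : Tendsto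
        (fun n => ⟪G (u n), u n⟫_ℝ - ⟪G (u n), z⟫_ℝ - ⟪u n, G z⟫_ℝ + ⟪G z, z⟫_ℝ)
        (U : Filter ℕ) (nhds (q - ⟪gT, z⟫_ℝ - ⟪ut, G z⟫_ℝ + ⟪G z, z⟫_ℝ)) :=
      ((hq.sub (hgT z)).sub (hut (G z))).add tendsto_const_nhds
    have h0 : 0 ≤ q - ⟪gT, z⟫_ℝ - ⟪ut, G z⟫_ℝ + ⟪G z, z⟫_ℝ :=
      ge_of_tendsto hlim (Filter.univ_mem' hmon)
    have e2 : ⟪G z, z - ut⟫_ℝ = ⟪G z, z⟫_ℝ - ⟪ut, G z⟫_ℝ := by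
      rw [inner_sub_right, real_inner_comm ut (G z)]
    linarith
  have hF6 : ∀ v ∈ Kstar, 0 ≤ ⟪G ut, v - ut⟫_ℝ := by
    intro v hv
    have hstep : ∀ t : ℝ, 0 < t → t ≤ 1 →
        -(t * (L * ‖v - ut‖ ^ 2)) ≤ ⟪G ut, v - ut⟫_ℝ := by
      intro t ht0 ht1
      set z : X := ut + t • (v - ut) with hz
      have hz_ut : z - ut = t • (v - ut) := by rw [hz]; abel
      have hgz : ⟪gT, z⟫_ℝ - q = (1 - t) * (⟪gT, ut⟫_ℝ - q) + t * (⟪gT, v⟫_ℝ - q) := by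
        rw [hz, inner_add_right, real_inner_smul_right, inner_sub_right]; ring
      have hgz0 : 0 ≤ ⟪gT, z⟫_ℝ - q := by
        rw [hgz, hgTq v hv]
        have h1 : 0 ≤ (1 - t) * (⟪gT, ut⟫_ℝ - q) := mul_nonneg (by linarith) (by linarith)
        have h2 : t * (q - q) = 0 := by ring
        linarith [h2]
      have h5 := hF5 z
      rw [hz_ut, real_inner_smul_right] at h5
      have hGz : 0 ≤ ⟪G z, v - ut⟫_ℝ :=
        (mul_nonneg_iff_of_pos_left ht0).1 (le_trans hgz0 h5)
      have h3 : ‖ut - z‖ = t * ‖v - ut‖ := by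
        have h : ut - z = -(t • (v - ut)) := by rw [hz]; abel
        rw [h, norm_neg, norm_smul, Real.norm_eq_abs, abs_of_pos ht0]
      have hdiff : -(L * (t * ‖v - ut‖) * ‖v - ut‖) ≤ ⟪G ut - G z, v - ut⟫_ℝ := by
        have h1 := (abs_le.1 (abs_real_inner_le_norm (G ut - G z) (v - ut))).1
        have h2 := hGlip ut z
        have h4 := mul_le_mul_of_nonneg_right h2 (norm_nonneg (v - ut))
        rw [h3] at h4
        have h5' := mul_le_mul_of_nonneg_right
          (le_refl (L * (t * ‖v - ut‖))) (norm_nonneg (v - ut))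
        linarith
      have esub : ⟪G ut - G z, v - ut⟫_ℝ = ⟪G ut, v - ut⟫_ℝ - ⟪G z, v - ut⟫_ℝ :=
        inner_sub_left _ _ _
      have ering : L * (t * ‖v - ut‖) * ‖v - ut‖ = t * (L * ‖v - ut‖ ^ 2) := by ring
      rw [esub, ering] at hdiff
      linarith
    have hseq : Tendsto (fun k : ℕ => -((1 / ((k : ℝ) + 1)) * (L * ‖v - ut‖ ^ 2)))
        atTop (nhds 0) := by
      have := (tendsto_one_div_add_atTop_nhds_zero_nat.mul_const (L * ‖v - ut‖ ^ 2)).neg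
      simpa using this
    refine le_of_tendsto_of_tendsto' hseq tendsto_const_nhds fun k => ?_
    refine hstep _ (by positivity) ?_
    rw [div_le_one (by positivity)]
    have : (0 : ℝ) ≤ (k : ℝ) := Nat.cast_nonneg k
    linarith
  have hutKs : ut ∈ Kstar :=
    hG_zero ut hutK fun v hv => le_antisymm (hG_neg ut hutK v hv) (hF6 v hv)
  -- the limiting inequality
  have hT : ⟪A ustar - f, ustar - ut⟫_ℝ + j ustar ustar - j ustar ut ≤ 0 := by
    have h1 := hust_vi ut hutKs
    have e1 : ⟪A ustar - f, ustar - ut⟫_ℝ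
        = ⟪A ustar, ustar - ut⟫_ℝ - ⟪f, ustar - ut⟫_ℝ := inner_sub_left _ _ _
    have e2 : ⟪A ustar, ustar - ut⟫_ℝ = -⟪A ustar, ut - ustar⟫_ℝ := by
      rw [← inner_neg_right, neg_sub]
    have e3 : ⟪f, ustar - ut⟫_ℝ = -⟪f, ut - ustar⟫_ℝ := by
      rw [← inner_neg_right, neg_sub]
    rw [e1, e2, e3]; linarith
  obtain ⟨δ, hδ0, hδeq⟩ : ∃ δ : ℝ, 0 < δ ∧ (m - α) * ε ^ 2 = 4 * δ :=
    ⟨(m - α) * ε ^ 2 / 4, div_pos (mul_pos hma (pow_pos hε 2)) (by norm_num), by ring⟩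
  obtain ⟨ξ₁, c₁, hξ₁, hξ₁'⟩ := affine_minorant (j ustar) (hj_convex ustar) (hj_lsc ustar)
      ut (j ustar ut - δ) (by linarith)
  have e : ∀ w : X, ⟪A ustar - f, ustar - w⟫_ℝ
      = ⟪A ustar - f, ustar⟫_ℝ - ⟪w, A ustar - f⟫_ℝ := by
    intro w; rw [inner_sub_right, real_inner_comm w]
  have hlim1 : Tendsto (fun n => ⟪A ustar - f, ustar - u n⟫_ℝ) (U : Filter ℕ)
      (nhds (⟪A ustar - f, ustar - ut⟫_ℝ)) := by
    have h : Tendsto (fun n => ⟪A ustar - f, ustar⟫_ℝ - ⟪u n, A ustar - f⟫_ℝ)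
        (U : Filter ℕ) (nhds (⟪A ustar - f, ustar⟫_ℝ - ⟪ut, A ustar - f⟫_ℝ)) :=
      tendsto_const_nhds.sub (hut (A ustar - f))
    rw [e ut]
    exact h.congr fun n => (e (u n)).symm
  have hlim2 : Tendsto (fun n => ⟪u n, ξ₁⟫_ℝ + c₁) (U : Filter ℕ)
      (nhds (⟪ut, ξ₁⟫_ℝ + c₁)) := (hut ξ₁).add (tendsto_const_nhds (x := c₁))
  have hξ₁'' : j ustar ut - δ < ⟪ut, ξ₁⟫_ℝ + c₁ := by
    rw [real_inner_comm]; exact hξ₁'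
  have hev1 : ∀ᶠ n in (U : Filter ℕ),
      ⟪A ustar - f, ustar - u n⟫_ℝ < ⟪A ustar - f, ustar - ut⟫_ℝ + δ :=
    hlim1.eventually_lt_const (by linarith)
  have hev2 : ∀ᶠ n in (U : Filter ℕ), j ustar ut - δ < ⟪u n, ξ₁⟫_ℝ + c₁ :=
    hlim2.eventually_const_lt hξ₁''
  obtain ⟨n, h1, h2, h3⟩ := (hev1.and (hev2.and hUS)).exists
  have hs := hstar n
  have hj1 : j ustar ut - δ < j ustar (u n) := by
    have hx := hξ₁ (u n)
    rw [real_inner_comm] at hx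
    exact lt_of_lt_of_le h2 hx
  have hεd : (m - α) * ε ^ 2 ≤ (m - α) * ‖u n - ustar‖ ^ 2 :=
    mul_le_mul_of_nonneg_left (pow_le_pow_left₀ hε.le h3 2) hma.le
  have hpos : 0 < (m - α) * ε ^ 2 := mul_pos hma (pow_pos hε 2)
  linarith [hδeq]
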